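/- For every Borel set D ⊆ ℝ² of finite two-dimensional Lebesgue measure, ∫_{θ=0}^{π} ∫_{r ∈ ℝ} μ¹(L_{r,θ} ∩ D) dr dθ = π · Leb₂(D), where μ¹ denotes one-dimensional Hausdorff measure on ℝ² and Leb₂ two-dimensional Lebesgue measure. -/

import Mathlib

open MeasureTheory Set
open scoped ENNReal

noncomputable section

/-- The line `L_{r,θ} = {(x, y) : x·cos θ + y·sin θ = r}` in the Euclidean plane. -/
def lineSet (r θ : ℝ) : Set (EuclideanSpace ℝ (Fin 2)) :=
  {p | p 0 * Real.cos θ + p 1 * Real.sin θ = r}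

/-- Coordinates of a complex number as a point of the Euclidean plane. -/
def cplxToPlane : ℂ → EuclideanSpace ℝ (Fin 2) := fun z => !₂[z.re, z.im]

lemma measurePreserving_cplxToPlane : MeasurePreserving cplxToPlane volume volume := by
  have h : cplxToPlane = (MeasurableEquiv.toLp 2 (Fin 2 → ℝ)).symm.symm ∘
      (MeasurableEquiv.finTwoArrow (α := ℝ)).symm ∘ Complex.measurableEquivRealProd := by
    funext z
    rfl
  rw [h]
  have h1 : MeasurePreserving (MeasurableEquiv.toLp 2 (Fin 2 → ℝ)).symm.symm volume volume :=
    (EuclideanSpace.volume_preserving_symm_measurableEquiv_toLp (Fin 2)).symm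
  have h2 : MeasurePreserving (MeasurableEquiv.finTwoArrow (α := ℝ)).symm volume volume :=
    (volume_preserving_finTwoArrow ℝ).symm
  exact (h1.comp h2).comp Complex.volume_preserving_equiv_real_prod

/-- The isometric parametrization of the line `L_{r,θ}`. -/
def lineParam (r θ t : ℝ) : EuclideanSpace ℝ (Fin 2) :=
  !₂[r * Real.cos θ - t * Real.sin θ, r * Real.sin θ + t * Real.cos θ]

lemma isometry_lineParam (r θ : ℝ) : Isometry (lineParam r θ) := by
  refine Isometry.of_dist_eq fun a b => ?_
  have h0 : ∀ t, lineParam r θ t 0 = r * Real.cos θ - t * Real.sin θ := fun _ => rfl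
  have h1 : ∀ t, lineParam r θ t 1 = r * Real.sin θ + t * Real.cos θ := fun _ => rfl
  rw [EuclideanSpace.dist_eq, Fin.sum_univ_two, h0, h0, h1, h1, Real.dist_eq, Real.dist_eq]
  rw [show |r * Real.cos θ - a * Real.sin θ - (r * Real.cos θ - b * Real.sin θ)| ^ 2
      + |r * Real.sin θ + a * Real.cos θ - (r * Real.sin θ + b * Real.cos θ)| ^ 2
      = (a - b) ^ 2 by
    rw [sq_abs, sq_abs]
    nlinarith [Real.sin_sq_add_cos_sq θ]]
  exact Real.sqrt_sq_eq_abs _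

lemma range_lineParam (r θ : ℝ) : Set.range (lineParam r θ) = lineSet r θ := by
  ext p
  constructor
  · rintro ⟨t, rfl⟩
    show lineParam r θ t 0 * Real.cos θ + lineParam r θ t 1 * Real.sin θ = r
    show (r * Real.cos θ - t * Real.sin θ) * Real.cos θ
        + (r * Real.sin θ + t * Real.cos θ) * Real.sin θ = r
    linear_combination r * Real.sin_sq_add_cos_sq θ
  · intro hp
    have hp' : p 0 * Real.cos θ + p 1 * Real.sin θ = r := hp
    refine ⟨-(p 0) * Real.sin θ + p 1 * Real.cos θ, ?_⟩
    ext i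
    fin_cases i
    · show r * Real.cos θ - (-(p 0) * Real.sin θ + p 1 * Real.cos θ) * Real.sin θ = p 0
      rw [← hp']
      linear_combination (p 0) * Real.sin_sq_add_cos_sq θ
    · show r * Real.sin θ + (-(p 0) * Real.sin θ + p 1 * Real.cos θ) * Real.cos θ = p 1
      rw [← hp']
      linear_combination (p 1) * Real.sin_sq_add_cos_sq θ

lemma lineParam_eq (r θ t : ℝ) :
    lineParam r θ t = cplxToPlane (rotation (Circle.exp θ)
      (Complex.measurableEquivRealProd.symm (r, t))) := by
  have : (rotation (Circle.exp θ) (Complex.measurableEquivRealProd.symm (r, t)))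
      = Complex.exp (θ * Complex.I) * Complex.mk r t := by
    rw [rotation_apply, Complex.measurableEquivRealProd_symm_apply]
    norm_cast
  rw [this]
  ext i
  fin_cases i
  · show r * Real.cos θ - t * Real.sin θ = (Complex.exp (θ * Complex.I) * Complex.mk r t).re
    rw [Complex.exp_mul_I]
    simp [Complex.mul_re, Complex.cos_ofReal_re, Complex.sin_ofReal_re]
    ring
  · show r * Real.sin θ + t * Real.cos θ = (Complex.exp (θ * Complex.I) * Complex.mk r t).im
    rw [Complex.exp_mul_I]
    simp [Complex.mul_im, Complex.cos_ofReal_re, Complex.sin_ofReal_re]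
    ring

lemma measurePreserving_G (θ : ℝ) :
    MeasurePreserving (fun p : ℝ × ℝ => lineParam p.1 θ p.2) volume volume := by
  have h : (fun p : ℝ × ℝ => lineParam p.1 θ p.2)
      = cplxToPlane ∘ (rotation (Circle.exp θ)) ∘ Complex.measurableEquivRealProd.symm := by
    funext p
    exact lineParam_eq p.1 θ p.2
  rw [h]
  have h2 : MeasurePreserving Complex.measurableEquivRealProd.symm volume volume :=
    Complex.volume_preserving_equiv_real_prod.symm
  exact measurePreserving_cplxToPlane.comp
    ((rotation (Circle.exp θ)).measurePreserving.comp h2)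

lemma inner_integral (D : Set (EuclideanSpace ℝ (Fin 2))) (hD : MeasurableSet D) (θ : ℝ) :
    ∫⁻ r : ℝ, MeasureTheory.Measure.hausdorffMeasure (1 : ℝ) (lineSet r θ ∩ D)
      = volume D := by
  have hG := measurePreserving_G θ
  have hGD : MeasurableSet ((fun p : ℝ × ℝ => lineParam p.1 θ p.2) ⁻¹' D) :=
    hD.preimage hG.measurable
  have key : ∀ r : ℝ, MeasureTheory.Measure.hausdorffMeasure (1 : ℝ) (lineSet r θ ∩ D)
      = volume (lineParam r θ ⁻¹' D) := by
    intro r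
    have h1 : lineSet r θ ∩ D = lineParam r θ '' (lineParam r θ ⁻¹' D) := by
      rw [Set.image_preimage_eq_inter_range, range_lineParam, Set.inter_comm]
    rw [h1, (isometry_lineParam r θ).hausdorffMeasure_image (Or.inl one_pos.le),
      MeasureTheory.hausdorffMeasure_real]
  calc ∫⁻ r : ℝ, MeasureTheory.Measure.hausdorffMeasure (1 : ℝ) (lineSet r θ ∩ D)
      = ∫⁻ r : ℝ, volume (Prod.mk r ⁻¹' ((fun p : ℝ × ℝ => lineParam p.1 θ p.2) ⁻¹' D)) := by
        refine lintegral_congr fun r => ?_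
        rw [key r]
        rfl
    _ = volume ((fun p : ℝ × ℝ => lineParam p.1 θ p.2) ⁻¹' D) := by
        rw [MeasureTheory.Measure.volume_eq_prod, MeasureTheory.Measure.prod_apply hGD]
    _ = volume D := hG.measure_preimage hD.nullMeasurableSet

/-- Crofton-type identity: for every Borel set `D ⊆ ℝ²` of finite Lebesgue measure,
`∫₀^π ∫_ℝ μ¹(L_{r,θ} ∩ D) dr dθ = π · Leb₂(D)`, where `μ¹` is one-dimensional
Hausdorff measure on `ℝ²`. -/
theorem crofton_identity (D : Set (EuclideanSpace ℝ (Fin 2)))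
    (hD : MeasurableSet D) (hfin : volume D < ⊤) :
    ∫⁻ θ in Set.Ico 0 Real.pi, ∫⁻ r : ℝ,
        MeasureTheory.Measure.hausdorffMeasure (1 : ℝ) (lineSet r θ ∩ D)
      = ENNReal.ofReal Real.pi * volume D := by
  rw [setLIntegral_congr_fun measurableSet_Ico
    (fun θ _ => inner_integral D hD θ)]
  rw [setLIntegral_const, Real.volume_Ico, sub_zero, mul_comm]
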